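/- In any feasible integer solution of the flow-based ILP for Graph Inspection, there is no circulation (closed directed flow) on the support of the x-variables that avoids the start vertex s. Precisely: if x assigns value 1 to every directed edge of a closed directed cycle C not containing s, and the charge variables satisfy y_{uv,u} + y_{uv,v} = 2(x_{u,v} + x_{v,u}) for all edges uv not incident to s, and for every vertex v ≠ s the total incoming charge sum over u in N(v)\{s} of y_{uv,v} is at most (2 - 2/(2n-3)) times the incoming flow sum over u in N(v) of x_{u,v}, then a contradiction arises; hence every unit of flow lies on a closed walk through s. -/

import Mathlib

/-- in the flow-based ILP for Graph Inspection, no feasible assignment can put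
one unit of flow on every directed edge of a closed directed cycle avoiding the start vertex
`s`: the charge constraints (2a) and (2b) then yield a contradiction, hence every unit of
flow lies on a closed walk through `s`. -/
theorem stmt14 {V : Type*} [Fintype V] [DecidableEq V]
    (s : V) (hn : 2 ≤ Fintype.card V)
    (x : V → V → ℝ) (y : Sym2 V → V → ℝ) (hy : ∀ e v, 0 ≤ y e v)
    (Cyc : List V) (hC3 : 3 ≤ Cyc.length)
    (hCclosed : Cyc.head? = Cyc.getLast?)
    (hCnodup : Cyc.dropLast.Nodup)
    (hCs : s ∉ Cyc)
    (hx : ∀ u v : V, x u v = if (u, v) ∈ Cyc.zip Cyc.tail then 1 else 0)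
    (h2a : ∀ u v : V, u ≠ s → v ≠ s →
        y s(u, v) u + y s(u, v) v = 2 * (x u v + x v u))
    (h2b : ∀ v : V, v ≠ s →
        ∑ u ∈ Finset.univ.erase s, y s(u, v) v ≤
          (2 - 2 / (2 * (Fintype.card V : ℝ) - 3)) * ∑ u : V, x u v) :
    False := by
  classical
  obtain ⟨a, b, l, rfl⟩ : ∃ a b l, Cyc = a :: b :: l := by
    match Cyc, hC3 with
    | a :: b :: l, _ => exact ⟨a, b, l, rfl⟩
  set Cyc : List V := a :: b :: l with hCyc
  have hCne : Cyc ≠ [] := by simp [hCyc]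
  -- every member of Cyc lies in Cyc.dropLast
  have hlast : Cyc.getLast hCne = a := by
    have := hCclosed
    rw [List.getLast?_eq_getLast hCne] at this
    simpa [hCyc] using this.symm
  have hmemDL : ∀ v ∈ Cyc, v ∈ Cyc.dropLast := by
    intro v hv
    have hsplit : Cyc.dropLast ++ [Cyc.getLast hCne] = Cyc :=
      List.dropLast_append_getLast hCne
    rw [← hsplit, List.mem_append] at hv
    rcases hv with hv | hv
    · exact hv
    · have hva : v = a := by simpa [hlast] using hv
      subst hva
      simp [hCyc]
  set S : Finset V := Cyc.dropLast.toFinset with hS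
  have hmemS : ∀ v ∈ Cyc, v ∈ S := fun v hv => List.mem_toFinset.mpr (hmemDL v hv)
  have hSne : ∀ v ∈ S, v ≠ s := by
    intro v hv h
    subst h
    exact hCs (List.Sublist.subset (List.dropLast_sublist Cyc) (List.mem_toFinset.mp hv))
  have hxnn : ∀ u v : V, 0 ≤ x u v := by
    intro u v; rw [hx]; split <;> norm_num
  have hx0 : ∀ u v : V, u ∉ S → x u v = 0 := by
    intro u v hu
    rw [hx]
    split
    · rename_i h
      exact absurd (hmemS u (List.of_mem_zip h).1) hu
    · rfl
  have hK : ∀ v ∈ S, ∑ u ∈ S, x u v = ∑ u : V, x u v := by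
    intro v _
    exact Finset.sum_subset (Finset.subset_univ S) (fun u _ hu => hx0 u v hu)
  set K : ℝ := ∑ v ∈ S, ∑ u ∈ S, x u v with hKdef
  -- K ≥ 1
  have hab : (a, b) ∈ Cyc.zip Cyc.tail := by simp [hCyc]
  have hxab : x a b = 1 := by rw [hx, if_pos hab]
  have haS : a ∈ S := hmemS a (by simp [hCyc])
  have hbS : b ∈ S := hmemS b (by simp [hCyc])
  have hK1 : (1 : ℝ) ≤ K := by
    calc (1 : ℝ) = x a b := hxab.symm
      _ ≤ ∑ u ∈ S, x u b := Finset.single_le_sum (fun u _ => hxnn u b) haS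
      _ ≤ K := Finset.single_le_sum
          (f := fun v => ∑ u ∈ S, x u v)
          (fun v _ => Finset.sum_nonneg fun u _ => hxnn u v) hbS
  set A : ℝ := ∑ v ∈ S, ∑ u ∈ S, y s(u, v) v with hAdef
  have hAB : A = ∑ v ∈ S, ∑ u ∈ S, y s(u, v) u := by
    rw [hAdef, Finset.sum_comm]
    exact Finset.sum_congr rfl fun u _ => Finset.sum_congr rfl fun v _ => by
      rw [Sym2.eq_swap]
  have hA2K : A = 2 * K := by
    have h1 : ∑ v ∈ S, ∑ u ∈ S, (y s(u, v) u + y s(u, v) v) = A + A := by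
      simp only [Finset.sum_add_distrib]
      rw [← hAB, ← hAdef]
    have h2 : ∑ v ∈ S, ∑ u ∈ S, (y s(u, v) u + y s(u, v) v)
        = ∑ v ∈ S, ∑ u ∈ S, (2 * (x u v + x v u)) := by
      exact Finset.sum_congr rfl fun v hv => Finset.sum_congr rfl fun u hu =>
        h2a u v (hSne u hu) (hSne v hv)
    have h3 : ∑ v ∈ S, ∑ u ∈ S, x v u = K := by
      rw [hKdef, Finset.sum_comm]
    have h4 : ∑ v ∈ S, ∑ u ∈ S, (2 * (x u v + x v u)) = 2 * (K + K) := by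
      simp only [mul_add, Finset.sum_add_distrib, ← Finset.mul_sum]
      rw [h3, ← hKdef]
      try ring
    have := h1.symm.trans (h2.trans h4)
    linarith
  set c : ℝ := 2 - 2 / (2 * (Fintype.card V : ℝ) - 3) with hcdef
  set T : ℝ := ∑ v ∈ S, ∑ u ∈ Finset.univ.erase s, y s(u, v) v with hTdef
  have hAT : A ≤ T := by
    apply Finset.sum_le_sum
    intro v _
    apply Finset.sum_le_sum_of_subset_of_nonneg
    · intro u hu
      exact Finset.mem_erase.mpr ⟨hSne u hu, Finset.mem_univ u⟩
    · intro u _ _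
      exact hy _ _
  have hTc : T ≤ c * K := by
    calc T ≤ ∑ v ∈ S, c * ∑ u : V, x u v :=
          Finset.sum_le_sum fun v hv => h2b v (hSne v hv)
      _ = ∑ v ∈ S, c * ∑ u ∈ S, x u v :=
          Finset.sum_congr rfl fun v hv => by rw [hK v hv]
      _ = c * K := by rw [hKdef, Finset.mul_sum]
  have hcard : (2 : ℝ) ≤ (Fintype.card V : ℝ) := by exact_mod_cast hn
  have hd : 0 < 2 / (2 * (Fintype.card V : ℝ) - 3) := by
    apply div_pos <;> linarith
  have h2cK : 2 * K ≤ c * K := by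
    calc 2 * K = A := hA2K.symm
      _ ≤ T := hAT
      _ ≤ c * K := hTc
  rw [hcdef] at h2cK
  have hKpos : (0 : ℝ) < K := lt_of_lt_of_le one_pos hK1
  nlinarith [mul_pos hd hKpos]
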